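/- arXiv:1810.05309 — 3 statements merged into one kernel-verified Lean document; each statement's English description precedes it below -/
import Mathlib

section
/- For s > 0, ρ > 0, and η > 2, the integral ∫_{(sρ)^{-1/η}}^∞ y/(y^η + 1) dy equals (sρ)^{(η-2)/η} · ₂F₁(1, 1 - 2/η; 2 - 2/η; -sρ) / (η - 2), when s = kθ/ρ this gives the term kθ · ₂F₁(1, 1-2/η; 2-2/η; -kθ)/(η-2) appearing in the inter-cell interference Laplace transform. -/
open Real MeasureTheory

/-- The Gauss hypergeometric function `₂F₁(a,b;c;z)` via the Euler integral representation
(valid for `c > b > 0` and `z < 1`, which extends the series by analytic continuation). -/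
noncomputable def twoF1 (a b c z : ℝ) : ℝ :=
  (Real.Gamma c / (Real.Gamma b * Real.Gamma (c - b))) *
    ∫ u in (0:ℝ)..1, u ^ (b - 1) * (1 - u) ^ (c - b - 1) * (1 - z * u) ^ (-a)

/-- For `t > 0` and path-loss exponent `η > 2`,
`∫_{t^{-1/η}}^∞ y/(1 + y^η) dy = t^{1-2/η} ₂F₁(1, 1-2/η; 2-2/η; -t)/(η-2)`,
the integral arising in the Laplace transform of the inter-cell interference. -/
theorem intercell_interference_integral (t η : ℝ) (ht : 0 < t) (hη : 2 < η) :
    ∫ y in Set.Ioi (t ^ (-1 / η) : ℝ), y / (1 + y ^ η)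
      = t ^ (1 - 2 / η) * twoF1 1 (1 - 2 / η) (2 - 2 / η) (-t) / (η - 2) := by
  have hη0 : (0:ℝ) < η := by linarith
  have hηne : η ≠ 0 := ne_of_gt hη0
  have hne2 : η - 2 ≠ 0 := by intro h; linarith [h]
  have hb : (0:ℝ) < 1 - 2 / η := by
    have : 2 / η < 1 := (div_lt_one hη0).mpr hη
    linarith
  have hexp_neg : -1 / η < 0 := by
    apply div_neg_of_neg_of_pos <;> linarith
  set f : ℝ → ℝ := fun u => (t * u) ^ (-1 / η) with hfdef
  set F : ℝ → ℝ := fun u => -1 / η * (t * u) ^ (-1 / η - 1) * t with hFdef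
  -- the image of (0,1) under f is (t^(-1/η), ∞)
  have himg : f '' Set.Ioo 0 1 = Set.Ioi (t ^ (-1 / η) : ℝ) := by
    ext y
    simp only [Set.mem_image, Set.mem_Ioi, Set.mem_Ioo]
    constructor
    · rintro ⟨u, ⟨hu0, hu1⟩, rfl⟩
      exact Real.rpow_lt_rpow_of_neg (by positivity) (mul_lt_of_lt_one_right ht hu1) hexp_neg
    · intro hy
      have hy0 : 0 < y := lt_trans (Real.rpow_pos_of_pos ht _) hy
      have hinv : (t ^ (-1 / η)) ^ (-η) = t := by
        rw [← Real.rpow_mul ht.le, show (-1 / η) * (-η) = 1 by field_simp, Real.rpow_one]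
      have hlt : y ^ (-η) < t := by
        calc y ^ (-η) < (t ^ (-1 / η)) ^ (-η) :=
              Real.rpow_lt_rpow_of_neg (Real.rpow_pos_of_pos ht _) hy (by linarith)
          _ = t := hinv
      refine ⟨y ^ (-η) / t, ⟨by positivity, (div_lt_one ht).mpr hlt⟩, ?_⟩
      have h1 : t * (y ^ (-η) / t) = y ^ (-η) := by field_simp
      show (t * (y ^ (-η) / t)) ^ (-1 / η) = y
      rw [h1, ← Real.rpow_mul hy0.le, show (-η) * (-1 / η) = 1 by field_simp, Real.rpow_one]
  have hderiv : ∀ u ∈ Set.Ioo (0:ℝ) 1, HasDerivWithinAt f (F u) (Set.Ioo 0 1) u := by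
    intro u hu
    have hx : t * u ≠ 0 := ne_of_gt (by nlinarith [hu.1])
    have h1 : HasDerivAt (fun x : ℝ => t * x) (t * 1) u := (hasDerivAt_id u).const_mul t
    have h2 := (Real.hasDerivAt_rpow_const (x := t * u) (p := -1 / η) (Or.inl hx)).comp u h1
    have h3 : (-1 / η * (t * u) ^ (-1 / η - 1)) * (t * 1) = F u := by
      simp only [hFdef]; ring
    exact (h3 ▸ h2).hasDerivWithinAt
  have hinj : Set.InjOn f (Set.Ioo 0 1) := by
    have : StrictAntiOn f (Set.Ioo 0 1) := by
      intro x hx y hy hxy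
      exact Real.rpow_lt_rpow_of_neg (by have := hx.1; positivity)
        (by have := hx.1; nlinarith) hexp_neg
    exact this.injOn
  have key := integral_image_eq_integral_abs_deriv_smul measurableSet_Ioo hderiv hinj
    (fun y => y / (1 + y ^ η))
  rw [himg] at key
  -- pointwise simplification on (0,1)
  have hpt : ∀ u ∈ Set.Ioo (0:ℝ) 1,
      |F u| • (f u / (1 + f u ^ η))
        = t ^ (1 - 2 / η) / η * (u ^ (1 - 2 / η - 1) * (1 + t * u)⁻¹) := by
    intro u hu
    obtain ⟨hu0, hu1⟩ := hu
    have hx : (0:ℝ) < t * u := by positivity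
    have hA : (0:ℝ) < (t * u) ^ (-1 / η - 1) := Real.rpow_pos_of_pos hx _
    have he : F u = -(1 / η * (t * u) ^ (-1 / η - 1) * t) := by
      simp only [hFdef]; ring
    have hFneg : F u < 0 := by
      have h0 : 0 < 1 / η * (t * u) ^ (-1 / η - 1) * t := by positivity
      rw [he]; linarith
    have habs : |F u| = 1 / η * (t * u) ^ (-1 / η - 1) * t := by
      rw [abs_of_neg hFneg, he, neg_neg]
    have hpow : f u ^ η = (t * u)⁻¹ := by
      show ((t * u) ^ (-1 / η)) ^ η = (t * u)⁻¹
      rw [← Real.rpow_mul hx.le, show (-1 / η) * η = -1 by field_simp]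
      exact Real.rpow_neg_one _
    have e1 : (t * u) ^ (-1 / η - 1) = (t * u) ^ (-1 / η) * (t * u)⁻¹ := by
      rw [← Real.rpow_neg_one (t * u), ← Real.rpow_add hx,
        show (-1 / η - 1) = -1 / η + -1 by ring]
    have e2 : (t * u) ^ (-1 / η) * (t * u) ^ (-1 / η) = t ^ (-(2 / η)) * u ^ (-(2 / η)) := by
      rw [← Real.rpow_add hx, show -1 / η + -1 / η = -(2 / η) by ring,
        Real.mul_rpow ht.le hu0.le]
    have e3 : t ^ (1 - 2 / η) = t * t ^ (-(2 / η)) := by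
      rw [show (1 - 2 / η) = 1 + -(2 / η) by ring, Real.rpow_add ht, Real.rpow_one]
    have e4 : u ^ (1 - 2 / η - 1) = u ^ (-(2 / η)) := by
      rw [show (1 - 2 / η - 1) = -(2 / η) by ring]
    have hden : (0:ℝ) < 1 + t * u := by positivity
    have hd : 1 + (t * u)⁻¹ = (1 + t * u) / (t * u) := by field_simp; ring
    rw [smul_eq_mul, habs, hpow]
    show 1 / η * (t * u) ^ (-1 / η - 1) * t * ((t * u) ^ (-1 / η) / (1 + (t * u)⁻¹))
      = t ^ (1 - 2 / η) / η * (u ^ (1 - 2 / η - 1) * (1 + t * u)⁻¹)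
    rw [e1, hd, div_div_eq_mul_div, e3, e4]
    have e5 : 1 / η * ((t * u) ^ (-1 / η) * (t * u)⁻¹) * t *
          ((t * u) ^ (-1 / η) * (t * u) / (1 + t * u))
        = t / η * ((t * u) ^ (-1 / η) * (t * u) ^ (-1 / η)) * (1 + t * u)⁻¹ := by
      field_simp
    rw [e5, e2]; ring
  have hIoo := setIntegral_congr_fun (μ := volume) measurableSet_Ioo hpt
  rw [key, hIoo, MeasureTheory.integral_const_mul]
  -- now the twoF1 side
  have hc : (2 - 2 / η) - (1 - 2 / η) = 1 := by ring
  have hG0 : Real.Gamma (1 - 2 / η) ≠ 0 := (Real.Gamma_pos_of_pos hb).ne'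
  have hGamma : Real.Gamma (2 - 2 / η) /
      (Real.Gamma (1 - 2 / η) * Real.Gamma ((2 - 2 / η) - (1 - 2 / η))) = 1 - 2 / η := by
    rw [hc, Real.Gamma_one, mul_one, show (2 - 2 / η) = (1 - 2 / η) + 1 by ring,
      Real.Gamma_add_one hb.ne', mul_div_assoc, div_self hG0, mul_one]
  have hint : (∫ u in (0:ℝ)..1, u ^ ((1 - 2 / η) - 1) * (1 - u) ^ ((2 - 2 / η) - (1 - 2 / η) - 1)
        * (1 - (-t) * u) ^ (-(1:ℝ)))
      = ∫ u in Set.Ioo (0:ℝ) 1, u ^ (1 - 2 / η - 1) * (1 + t * u)⁻¹ := by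
    rw [intervalIntegral.integral_of_le zero_le_one, integral_Ioc_eq_integral_Ioo]
    refine setIntegral_congr_fun measurableSet_Ioo ?_
    intro u hu
    obtain ⟨hu0, hu1⟩ := hu
    have h1 : ((2 - 2 / η) - (1 - 2 / η) - 1) = (0:ℝ) := by ring
    have h2 : 1 - (-t) * u = 1 + t * u := by ring
    show u ^ (1 - 2 / η - 1) * (1 - u) ^ ((2 - 2 / η) - (1 - 2 / η) - 1)
        * (1 - (-t) * u) ^ (-(1:ℝ)) = u ^ (1 - 2 / η - 1) * (1 + t * u)⁻¹
    rw [h1, Real.rpow_zero, mul_one, h2, Real.rpow_neg_one]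
  rw [twoF1, hGamma, hint]
  generalize (∫ u in Set.Ioo (0:ℝ) 1, u ^ (1 - 2 / η - 1) * (1 + t * u)⁻¹) = I
  generalize t ^ (1 - 2 / η) = T
  field_simp
end

section
/- Deconditioning the truncated-exponential Laplace transform over the maximum of n+1 i.i.d. exponentials: for s = kθ (with θ > 0, k ≥ 1 natural) and n ≥ 1, ∫_0^∞ [(1 - e^{-(s+1)y})/((1+s)(1 - e^{-y}))] · (n+1)(1-e^{-y})^n e^{-y} dy = ((n+1)/(1+kθ)) · (1/n - Γ(n)Γ(2+kθ)/Γ(2+n+kθ)). -/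
open Real MeasureTheory


lemma prod_aux_gamma (x : ℝ) (hx : 0 < x) (m : ℕ) :
    Real.Gamma (x + m) = Real.Gamma x * ∏ j ∈ Finset.range m, (x + j) := by
  induction m with
  | zero => simp
  | succ m ih =>
    have hxm : x + (m:ℝ) ≠ 0 := by positivity
    have : x + ((m+1 : ℕ):ℝ) = (x + m) + 1 := by push_cast; ring
    rw [this, Real.Gamma_add_one hxm, ih, Finset.prod_range_succ]
    ring

lemma beta_aux (m : ℕ) : ∀ a : ℝ, 1 < a →
    ∫ t in (0:ℝ)..1, t ^ a * (1-t)^m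
      = (m.factorial : ℝ) / ∏ j ∈ Finset.range (m+1), (a+1+j) := by
  induction m with
  | zero =>
    intro a ha
    have h : (-1:ℝ) < a := by linarith
    simp only [pow_zero, mul_one, Nat.factorial_zero]
    rw [integral_rpow (Or.inl h)]
    rw [Real.one_rpow, Real.zero_rpow (by linarith)]
    simp
  | succ m ih =>
    intro a ha
    have ha1 : a + 1 ≠ 0 := by linarith
    have hu : ∀ x ∈ Set.uIcc (0:ℝ) 1, HasDerivAt (fun t : ℝ => (1-t)^(m+1))
        (-( (m+1) * (1-x)^m)) x := by
      intro x _
      have h1 : HasDerivAt (fun t : ℝ => 1 - t) (-1) x := by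
        simpa using (hasDerivAt_id x).const_sub 1
      have := (hasDerivAt_pow (m+1) (1-x)).comp x h1
      simpa [Function.comp_def, mul_comm, mul_assoc, mul_left_comm] using this
    have hv : ∀ x ∈ Set.uIcc (0:ℝ) 1, HasDerivAt (fun t : ℝ => t^(a+1)/(a+1)) (x^a) x := by
      intro x _
      have h1 : HasDerivAt (fun t : ℝ => t^(a+1)) ((a+1) * x^(a+1-1)) x :=
        Real.hasDerivAt_rpow_const (Or.inr (by linarith))
      have h2 := h1.div_const (a+1)
      have : (a+1) * x^(a+1-1) / (a+1) = x^a := by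
        rw [mul_div_assoc, mul_comm]
        field_simp
        ring_nf
      rwa [this] at h2
    have hcontv : IntervalIntegrable (fun x : ℝ => x ^ a) volume 0 1 := by
      apply ContinuousOn.intervalIntegrable
      intro x _
      exact (Real.continuousAt_rpow_const x a (Or.inr (by linarith))).continuousWithinAt
    have hcontu : IntervalIntegrable (fun x : ℝ => -((m+1) * (1-x)^m)) volume 0 1 := by
      apply Continuous.intervalIntegrable; fun_prop
    have parts := intervalIntegral.integral_mul_deriv_eq_deriv_mul hu hv hcontu hcontv
    have hb : ((fun t : ℝ => (1-t)^(m+1)) 1) * ((fun t : ℝ => t^(a+1)/(a+1)) 1)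
        - ((fun t : ℝ => (1-t)^(m+1)) 0) * ((fun t : ℝ => t^(a+1)/(a+1)) 0) = 0 := by
      simp [Real.zero_rpow ha1]
    rw [hb] at parts
    have key : ∫ t in (0:ℝ)..1, t ^ a * (1-t)^(m+1)
        = ((m+1:ℝ)/(a+1)) * ∫ t in (0:ℝ)..1, t^(a+1) * (1-t)^m := by
      have := parts
      simp_rw [mul_comm] at this
      rw [this]
      rw [zero_sub, ← intervalIntegral.integral_neg, ← intervalIntegral.integral_const_mul]
      apply intervalIntegral.integral_congr
      intro t _
      ring
    rw [key, ih (a+1) (by linarith)]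
    rw [Nat.factorial_succ]
    have hprod : ∏ j ∈ Finset.range (m+1+1), (a+1+j)
        = (a+1) * ∏ j ∈ Finset.range (m+1), (a+1+1+j) := by
      rw [Finset.prod_range_succ', mul_comm]
      congr 1
      · norm_num
      · apply Finset.prod_congr rfl; intro j _; push_cast; ring
    rw [hprod]
    have hpne : (∏ j ∈ Finset.range (m+1), (a+1+1+j)) ≠ 0 := by
      apply Finset.prod_ne_zero_iff.2
      intro j _
      have : (0:ℝ) ≤ j := Nat.cast_nonneg j
      positivity
    field_simp
    norm_cast

/-- Deconditioning the truncated-exponential Laplace transform over the maximum of `n+1`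
i.i.d. Exp(1) variables: for `s = kθ` with `θ > 0`, `k ≥ 1`, `n ≥ 1`,
`∫_0^∞ (1 - e^{-(s+1)y})/((1+s)(1-e^{-y})) · (n+1)(1-e^{-y})^n e^{-y} dy
  = ((n+1)/(1+kθ)) (1/n - Γ(n)Γ(2+kθ)/Γ(2+n+kθ))`. -/
theorem decondition_truncated_laplace_over_max
    (θ : ℝ) (hθ : 0 < θ) (k n : ℕ) (hk : 1 ≤ k) (hn : 1 ≤ n) :
    ∫ y in Set.Ioi (0:ℝ),
        ((1 - Real.exp (-((k * θ) + 1) * y)) / ((1 + k * θ) * (1 - Real.exp (-y)))) *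
          ((n + 1) * (1 - Real.exp (-y)) ^ n * Real.exp (-y))
      = ((n + 1) / (1 + k * θ)) *
          (1 / n - Real.Gamma n * Real.Gamma (2 + k * θ) / Real.Gamma (2 + n + k * θ)) := by
  set s : ℝ := (k:ℝ) * θ with hs_def
  have hs : 0 < s := by
    have : (1:ℝ) ≤ (k:ℝ) := by exact_mod_cast hk
    have := mul_pos (lt_of_lt_of_le one_pos this) hθ
    simpa [hs_def] using this
  have hs1 : (0:ℝ) < 1 + s := by linarith
  set F : ℝ → ℝ := fun t => ((n+1) / (1+s)) * ((1 - t ^ (s+1)) * (1-t)^(n-1)) with hF_def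
  -- Step 1: rewrite the integrand
  have step1 : ∫ y in Set.Ioi (0:ℝ),
        ((1 - Real.exp (-(s + 1) * y)) / ((1 + s) * (1 - Real.exp (-y)))) *
          ((n + 1) * (1 - Real.exp (-y)) ^ n * Real.exp (-y))
      = ∫ y in Set.Ioi (0:ℝ), Real.exp (-y) * F (Real.exp (-y)) := by
    apply setIntegral_congr_fun measurableSet_Ioi
    intro y hy
    have hy0 : (0:ℝ) < y := hy
    have ht1 : Real.exp (-y) < 1 := by
      rw [Real.exp_lt_one_iff]; linarith
    have htne : 1 - Real.exp (-y) ≠ 0 := ne_of_gt (by linarith)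
    have hrp : Real.exp (-y) ^ (s+1) = Real.exp (-(s+1)*y) := by
      rw [← Real.exp_mul]; ring_nf
    have hpow : (1 - Real.exp (-y))^n = (1 - Real.exp (-y))^(n-1) * (1 - Real.exp (-y)) := by
      rw [← pow_succ]; congr 1; omega
    simp only [hF_def, hrp, hpow]
    field_simp
  -- Step 2: substitution t = exp(-y)
  have himg : (fun y : ℝ => Real.exp (-y)) '' Set.Ioi 0 = Set.Ioo 0 1 := by
    ext t
    constructor
    · rintro ⟨y, hy, rfl⟩
      exact ⟨Real.exp_pos _, by rw [Real.exp_lt_one_iff]; simpa using (show (0:ℝ) < y from hy)⟩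
    · rintro ⟨ht0, ht1⟩
      refine ⟨-Real.log t, ?_, by simp [Real.exp_log ht0]⟩
      simp only [Set.mem_Ioi]
      have := Real.log_neg ht0 ht1
      linarith
  have hderiv : ∀ y ∈ Set.Ioi (0:ℝ),
      HasDerivWithinAt (fun y : ℝ => Real.exp (-y)) (-Real.exp (-y)) (Set.Ioi 0) y := by
    intro y _
    have h1 : HasDerivAt (fun y : ℝ => Real.exp (-y)) (Real.exp (-y) * (-1)) y :=
      (Real.hasDerivAt_exp (-y)).comp y (hasDerivAt_neg y)
    simpa [mul_comm] using h1.hasDerivWithinAt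
  have hinj : Set.InjOn (fun y : ℝ => Real.exp (-y)) (Set.Ioi 0) := by
    intro a _ b _ h
    have := Real.exp_injective h
    linarith [neg_injective this]
  have step2 : ∫ t in Set.Ioo (0:ℝ) 1, F t
      = ∫ y in Set.Ioi (0:ℝ), Real.exp (-y) * F (Real.exp (-y)) := by
    rw [← himg, integral_image_eq_integral_abs_deriv_smul measurableSet_Ioi hderiv hinj F]
    apply setIntegral_congr_fun measurableSet_Ioi
    intro y _
    simp [abs_of_pos (Real.exp_pos (-y))]
  -- Step 3: compute the Ioo integral
  have hcont_rpow : IntervalIntegrable (fun t : ℝ => t ^ (s+1) * (1-t)^(n-1)) volume 0 1 := by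
    apply ContinuousOn.intervalIntegrable
    apply ContinuousOn.mul
    · intro x _
      exact (Real.continuousAt_rpow_const x (s+1) (Or.inr (by linarith))).continuousWithinAt
    · fun_prop
  have hcont_pow : IntervalIntegrable (fun t : ℝ => (1-t)^(n-1)) volume 0 1 := by
    apply Continuous.intervalIntegrable; fun_prop
  have hI1 : ∫ t in (0:ℝ)..1, (1-t)^(n-1) = 1 / n := by
    have h := intervalIntegral.integral_comp_sub_left (a := 0) (b := 1) (fun t : ℝ => t^(n-1)) 1
    simp only [sub_zero, sub_self] at h
    rw [h, integral_pow]
    have hn1 : n - 1 + 1 = n := by omega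
    rw [hn1, zero_pow (by omega : n ≠ 0)]
    rw [Nat.cast_sub hn]
    push_cast
    rw [one_div]
    congr 1
    ring
  have hI2 : ∫ t in (0:ℝ)..1, t ^ (s+1) * (1-t)^(n-1)
      = ((n-1).factorial : ℝ) / ∏ j ∈ Finset.range n, (s+2+j) := by
    rw [beta_aux (n-1) (s+1) (by linarith)]
    have hn1 : n - 1 + 1 = n := by omega
    rw [hn1]
    congr 1
    apply Finset.prod_congr rfl
    intro j _
    ring
  have step3 : ∫ t in Set.Ioo (0:ℝ) 1, F t
      = ((n+1) / (1+s)) * (1/n - ((n-1).factorial : ℝ) / ∏ j ∈ Finset.range n, (s+2+j)) := by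
    rw [← integral_Ioc_eq_integral_Ioo,
        ← intervalIntegral.integral_of_le (by norm_num : (0:ℝ) ≤ 1)]
    have hsplit : ∀ t : ℝ, F t = ((n+1)/(1+s)) * ((1-t)^(n-1) - t^(s+1)*(1-t)^(n-1)) := by
      intro t; simp only [hF_def]; ring
    simp_rw [hsplit]
    rw [intervalIntegral.integral_const_mul,
        intervalIntegral.integral_sub hcont_pow hcont_rpow, hI1, hI2]
  -- Gamma identity
  have hgamma : Real.Gamma n * Real.Gamma (2+s) / Real.Gamma (2+(n:ℝ)+s)
      = ((n-1).factorial : ℝ) / ∏ j ∈ Finset.range n, (s+2+j) := by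
    have h1 : Real.Gamma (2+(n:ℝ)+s) = Real.Gamma (2+s) * ∏ j ∈ Finset.range n, (2+s+j) := by
      have : (2:ℝ) + n + s = (2+s) + n := by ring
      rw [this, prod_aux_gamma (2+s) (by linarith) n]
    have h2 : Real.Gamma n = ((n-1).factorial : ℝ) := by
      have : (n:ℝ) = ((n-1:ℕ):ℝ) + 1 := by
        have : n - 1 + 1 = n := by omega
        rw [← this]; push_cast; ring
      rw [this, Real.Gamma_nat_eq_factorial]
    have hGne : Real.Gamma (2+s) ≠ 0 := ne_of_gt (Real.Gamma_pos_of_pos (by linarith))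
    have hPne : (∏ j ∈ Finset.range n, (2+s+(j:ℝ))) ≠ 0 := by
      apply Finset.prod_ne_zero_iff.2
      intro j _
      have : (0:ℝ) ≤ j := Nat.cast_nonneg j
      positivity
    rw [h1, h2]
    rw [show (∏ j ∈ Finset.range n, (s+2+(j:ℝ))) = ∏ j ∈ Finset.range n, (2+s+(j:ℝ)) by
      apply Finset.prod_congr rfl; intro j _; ring]
    field_simp
  -- assemble
  have hfinal : ∫ y in Set.Ioi (0:ℝ),
        ((1 - Real.exp (-(s + 1) * y)) / ((1 + s) * (1 - Real.exp (-y)))) *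
          ((n + 1) * (1 - Real.exp (-y)) ^ n * Real.exp (-y))
      = ((n+1) / (1+s)) * (1/n - ((n-1).factorial : ℝ) / ∏ j ∈ Finset.range n, (s+2+j)) := by
    rw [step1, ← step2, step3]
  rw [← hgamma] at hfinal
  convert hfinal using 3 <;> ring
end

section
/- Expected waiting time for the Geo/Geo/1 queue: with stationary distribution x_0 = (p-a)/p and the waiting-time distribution defined by P(W=0)=x_0 and P(W=j)=Σ_{v=1}^j x_v B_j^{(v)} where B_j^{(1)} = (1-p)^{j-1} p, B_k^{(k)} = p^k, and B_j^{(k)} = (1-p) B_{j-1}^{(k)} + p B_{j-1}^{(k-1)} for j > k ≥ 1, the mean satisfies E[W] = Σ_j j P(W=j) = a(1-a)x_0/(p-a)². -/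
/-- Expected waiting time in the Geo/Geo/1 queue: with `0 < a < p < 1`, stationary
distribution `x₀ = (p-a)/p`, `x_v = R^v x₀/(1-p)` (`v ≥ 1`, `R = a(1-p)/((1-a)p)`), and the
waiting-time distribution `P(W=0)=x₀`, `P(W=j)=Σ_{v=1}^j x_v B_j^{(v)}`, where
`B_j^{(1)} = (1-p)^{j-1} p`, `B_k^{(k)} = p^k`, and
`B_j^{(k)} = (1-p) B_{j-1}^{(k)} + p B_{j-1}^{(k-1)}` for `j > k ≥ 1`, the mean waiting time is
`E[W] = Σ_j j P(W=j) = a(1-a)x₀/(p-a)²`. -/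
theorem geo_geo_one_mean_waiting_time
    (a p : ℝ) (ha : 0 < a) (hap : a < p) (hp : p < 1)
    (R x₀ : ℝ) (hR : R = a * (1 - p) / ((1 - a) * p)) (hx0 : x₀ = (p - a) / p)
    (x : ℕ → ℝ) (hx : ∀ v : ℕ, 1 ≤ v → x v = R ^ v * x₀ / (1 - p))
    (B : ℕ → ℕ → ℝ)
    (hB1 : ∀ j : ℕ, 1 ≤ j → B j 1 = (1 - p) ^ (j - 1) * p)
    (hBk : ∀ k : ℕ, 1 ≤ k → B k k = p ^ k)
    (hBrec : ∀ j k : ℕ, 1 ≤ k → k < j → B j k = (1 - p) * B (j - 1) k + p * B (j - 1) (k - 1)) :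
    ∑' j : ℕ, (j : ℝ) * ∑ v ∈ Finset.Icc 1 j, x v * B j v
      = a * (1 - a) * x₀ / (p - a) ^ 2 := by
  have h1a : (0:ℝ) < 1 - a := by linarith
  have h1p : (0:ℝ) < 1 - p := by linarith
  have hp0 : (0:ℝ) < p := lt_trans ha hap
  have hpa : (0:ℝ) < p - a := by linarith
  set q : ℝ := (1 - p) / (1 - a) with hq
  set c : ℝ := x₀ * a / (1 - a) with hc
  have hq0 : 0 < q := div_pos h1p h1a
  have hq1 : q < 1 := (div_lt_one h1a).2 (by linarith)
  -- closed form for B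
  have hBform : ∀ j v : ℕ, 1 ≤ v → v ≤ j →
      B j v = (Nat.choose (j-1) (v-1) : ℝ) * p ^ v * (1 - p) ^ (j - v) := by
    intro j
    induction j with
    | zero => intro v h1 h2; omega
    | succ m ih =>
      intro v h1 h2
      rcases eq_or_lt_of_le h2 with hv | hv
      · subst hv
        rw [hBk _ h1]
        simp [Nat.choose_self]
      · have hvm : v ≤ m := by omega
        match v, h1 with
        | 1, _ =>
          rw [hB1 (m+1) (by omega)]
          simp
          ring
        | (u+2), _ =>
          have hum : u + 1 ≤ m := by omega
          obtain ⟨n, rfl⟩ : ∃ n, m = n + 1 := ⟨m - 1, by omega⟩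
          have hrec := hBrec (n+2) (u+2) (by omega) (by omega)
          rw [hrec]
          have r1 : n + 2 - 1 = n + 1 := by omega
          have r2 : u + 2 - 1 = u + 1 := by omega
          rw [r1, r2, ih (u+2) (by omega) (by omega), ih (u+1) (by omega) (by omega)]
          have e1 : n + 1 + 1 - 1 = n + 1 := by omega
          have e2 : n + 1 - 1 = n := by omega
          have e3 : u + 2 - 1 = u + 1 := by omega
          have e4 : u + 1 - 1 = u := by omega
          have hun : u + 1 ≤ n := by omega
          have e5 : n + 1 - (u + 2) = n - (u + 1) := by omega
          have e6 : n + 1 - (u + 1) = (n - (u + 1)) + 1 := by omega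
          have e7 : n + 1 + 1 - (u + 2) = (n - (u + 1)) + 1 := by omega
          rw [e2, e3, e4, e5, e6, e7, Nat.choose_succ_succ n u]
          push_cast
          ring
  -- inner sum
  have hinner : ∀ m : ℕ, ∑ v ∈ Finset.Icc 1 (m+1), x v * B (m+1) v = c * q ^ m := by
    intro m
    have hIcc : Finset.Icc 1 (m+1) = Finset.image (· + 1) (Finset.range (m+1)) := by
      ext w
      simp only [Finset.mem_Icc, Finset.mem_image, Finset.mem_range]
      constructor
      · rintro ⟨hw1, hw2⟩; exact ⟨w - 1, by omega, by omega⟩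
      · rintro ⟨u, hu, rfl⟩; omega
    rw [hIcc, Finset.sum_image (by intro a _ b _ h; simp only at h; omega)]
    have hterms : ∀ u ∈ Finset.range (m + 1), x (u+1) * B (m+1) (u+1)
        = (x₀ * R * p / (1-p)) * ((R*p)^u * (1-p)^(m-u) * (Nat.choose m u : ℝ)) := by
      intro u hu
      simp only [Finset.mem_range] at hu
      have hum : u ≤ m := by omega
      rw [hx (u+1) (by omega), hBform (m+1) (u+1) (by omega) (by omega)]
      have e1 : m + 1 - 1 = m := by omega
      have e2 : u + 1 - 1 = u := by omega
      have e3 : m + 1 - (u + 1) = m - u := by omega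
      rw [e1, e2, e3, pow_succ, pow_succ, mul_pow]
      ring
    rw [Finset.sum_congr rfl hterms, ← Finset.mul_sum, ← add_pow]
    have hRp : R * p + (1 - p) = q := by
      rw [hR, hq]; field_simp; ring
    have hcoef : x₀ * R * p / (1 - p) = c := by
      rw [hR, hc]; field_simp
    rw [hRp, hcoef]
  -- pointwise rewrite
  have hterm : ∀ j : ℕ, (j:ℝ) * ∑ v ∈ Finset.Icc 1 j, x v * B j v
      = (c/q) * ((j:ℝ) * q^j) := by
    intro j
    cases j with
    | zero => simp
    | succ m =>
      rw [hinner m, pow_succ]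
      field_simp
  rw [tsum_congr hterm, tsum_mul_left,
    tsum_coe_mul_geometric_of_norm_lt_one
      (by rw [Real.norm_eq_abs, abs_of_pos hq0]; exact hq1)]
  have h1q : (1:ℝ) - q = (p - a) / (1 - a) := by
    rw [hq]; field_simp; ring
  rw [hc, hq, h1q]
  field_simp
end
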